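/- In the hero–villain setting, if a puzzle has a solution, then it has a solution in which the sequence of locations visited by the hero forms a hero path. -/

import Mathlib

/-- A move ⟨ℓ₀, ℓ₁, …, ℓ_k⟩ (k ≥ 1): source ℓ₀, intermediate locations, destination ℓ_k. -/
structure ChessMove (α : Type*) where
  src : α
  mid : List α
  dst : α

/-- The full sequence of locations of a move. -/
def ChessMove.toList {α : Type*} (m : ChessMove α) : List α :=
  m.src :: (m.mid ++ [m.dst])

/-- A piece type is closed under submoves if every contiguous subsequence (of length ≥ 2,
which is automatic for a `ChessMove`) of a move is again a move of that type. -/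
def ClosedUnderSubmoves {α : Type*} (T : Set (ChessMove α)) : Prop :=
  ∀ m ∈ T, ∀ m' : ChessMove α, m'.toList <:+: m.toList → m' ∈ T

/-- A piece type is symmetric if it is closed under reversal of moves. -/
def SymmetricType {α : Type*} (T : Set (ChessMove α)) : Prop :=
  ∀ m ∈ T, (⟨m.dst, m.mid.reverse, m.src⟩ : ChessMove α) ∈ T

/-- A move is valid in position `P` if its source and destination are occupied
and its intermediate locations are empty. -/
def MoveValid {α : Type*} (P : Set α) (m : ChessMove α) : Prop :=
  m.src ∈ P ∧ m.dst ∈ P ∧ ∀ x ∈ m.mid, x ∉ P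

/-- Executing a move empties its source location. -/
def execMove {α : Type*} (P : Set α) (m : ChessMove α) : Set α := P \ {m.src}

/-- A sequence of moves is valid from position `P` if each move is valid in the position
obtained by executing all previous moves. -/
def ValidSeq {α : Type*} : Set α → List (ChessMove α) → Prop
  | _, [] => True
  | P, m :: ms => MoveValid P m ∧ ValidSeq (execMove P m) ms

/-- The position obtained after executing all moves of a sequence. -/
def finalPos {α : Type*} (P : Set α) (ms : List (ChessMove α)) : Set α :=
  ms.foldl execMove P

/-- A solution for piece type `T` from the fully occupied initial position with
final location `r`: a valid sequence of moves of `T` ending with only `r` occupied. -/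
def IsSolution {α : Type*} (T : Set (ChessMove α)) (ms : List (ChessMove α)) (r : α) : Prop :=
  (∀ m ∈ ms, m ∈ T) ∧ ValidSeq Set.univ ms ∧ finalPos Set.univ ms = {r}

/-- Edge of the immediate capture graph ICG on the fully occupied board:
a two-location move of `T`. -/
def ICGedge {α : Type*} (T : Set (ChessMove α)) (a b : α) : Prop :=
  (⟨a, [], b⟩ : ChessMove α) ∈ T

/-- Edge of the immediate capture graph ICG(V, B): an edge `(a, b)` for every move of `T`
from `a ∈ V` to `b ∈ V` none of whose intermediate locations is in `V ∪ B`. -/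
def ICGEdge {α : Type*} (T : Set (ChessMove α)) (V B : Set α) (a b : α) : Prop :=
  a ∈ V ∧ b ∈ V ∧ ∃ m ∈ T, m.src = a ∧ m.dst = b ∧ ∀ x ∈ m.mid, x ∉ V ∪ B

/-- `H_i(p) = ICG(L ∖ {p₀, …, p_i}, {p_i})`. -/
def Hgraph {α : Type*} (T : Set (ChessMove α)) (p : ℕ → α) (i : ℕ) : α → α → Prop :=
  ICGEdge T {x | ∀ j ≤ i, x ≠ p j} {p i}

/-- `G_i(p) = ICG(L ∖ {p₀, …, p_i}, ∅)`. -/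
def Ggraph {α : Type*} (T : Set (ChessMove α)) (p : ℕ → α) (i : ℕ) : α → α → Prop :=
  ICGEdge T {x | ∀ j ≤ i, x ≠ p j} ∅

/-- A villain at `v` is strongly capturable by the hero location sequence `p₀, …, p_k`
if for some `i < k` there is a directed walk from `v` to `p_{i+1}` in `H_i(p)`. -/
def StronglyCapturable {α : Type*} (T : Set (ChessMove α)) (p : ℕ → α) (k : ℕ) (v : α) :
    Prop :=
  ∃ i < k, Relation.ReflTransGen (Hgraph T p i) v (p (i + 1))

/-- `p₀, …, p_k` is a hero path: there are hero moves `⟨p_i, …, p_{i+1}⟩ ∈ S`,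
each valid in the initial (fully occupied) position with `p₀, …, p_{i-1}` removed. -/
def HeroPath {α : Type*} (S : Set (ChessMove α)) (p : ℕ → α) (k : ℕ) : Prop :=
  ∀ i < k, ∃ mid : List α, (⟨p i, mid, p (i + 1)⟩ : ChessMove α) ∈ S ∧
    MoveValid {x | ∀ j < i, x ≠ p j} ⟨p i, mid, p (i + 1)⟩

/-- A villain at `v` is weakly capturable after the hero path `p₀, …, p_k` if some hero path
extending it ends at a location reachable from `v` by a directed walk in `G_k(p)`. -/
def WeaklyCapturable {α : Type*} (S T : Set (ChessMove α)) (p : ℕ → α) (k : ℕ) (v : α) :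
    Prop :=
  ∃ (k' : ℕ) (q : ℕ → α), k ≤ k' ∧ (∀ i ≤ k, q i = p i) ∧ HeroPath S q k' ∧
    Relation.ReflTransGen (Ggraph T p k) v (q k')

/-- A hero path `p₀, …, p_k` is `v`-interesting if the villain at `v` is not strongly
capturable by it but is weakly capturable after it. -/
def Interesting {α : Type*} (S T : Set (ChessMove α)) (p : ℕ → α) (k : ℕ) (v : α) : Prop :=
  ¬ StronglyCapturable T p k v ∧ WeaklyCapturable S T p k v

/-- A valid sequence of hero/villain moves from position `P` with the hero at `h`:
entries tagged `true` are hero moves (from the hero's current location, in `S`),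
entries tagged `false` are villain moves (in `T`, not touching the hero). -/
def HVValidSeq {α : Type*} (S T : Set (ChessMove α)) :
    Set α → α → List (Bool × ChessMove α) → Prop
  | _, _, [] => True
  | P, h, (b, m) :: ms =>
      if b then
        m ∈ S ∧ m.src = h ∧ MoveValid P m ∧ HVValidSeq S T (P \ {m.src}) m.dst ms
      else
        m ∈ T ∧ m.src ≠ h ∧ m.dst ≠ h ∧ MoveValid P m ∧ HVValidSeq S T (P \ {m.src}) h ms

/-- The final position of a hero/villain play from the fully occupied board. -/
def hvFinalPos {α : Type*} (ms : List (Bool × ChessMove α)) : Set α :=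
  ms.foldl (fun P bm => P \ {bm.2.src}) Set.univ

/-- The final hero location of a hero/villain play started with the hero at `p0`. -/
def hvFinalHero {α : Type*} (p0 : α) (ms : List (Bool × ChessMove α)) : α :=
  ms.foldl (fun h bm => if bm.1 then bm.2.dst else h) p0

/-- The subsequence of hero moves of a play. -/
def heroMoves {α : Type*} (ms : List (Bool × ChessMove α)) : List (ChessMove α) :=
  (ms.filter (fun bm => bm.1)).map (fun bm => bm.2)

/-- A solution of the hero–villain puzzle with the hero starting at `p0`:
a valid play ending with only the hero on the board. -/
def HVSolution {α : Type*} (S T : Set (ChessMove α)) (p0 : α)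
    (ms : List (Bool × ChessMove α)) : Prop :=
  HVValidSeq S T Set.univ p0 ms ∧ hvFinalPos ms = {hvFinalHero p0 ms}

/-- The hero makes exactly `k` moves, visiting the locations `p₀, p₁, …, p_k` in order. -/
def HeroFollows {α : Type*} (p : ℕ → α) (k : ℕ) (ms : List (Bool × ChessMove α)) : Prop :=
  ∃ mid : ℕ → List α,
    heroMoves ms = (List.range k).map (fun i => ⟨p i, mid i, p (i + 1)⟩)


/-! ### Auxiliary machinery for `solution_hero_path` -/

namespace SoloChessAux

set_option linter.unusedSectionVars false
set_option linter.unnecessarySeqFocus false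

variable {α : Type*} [DecidableEq α]

/-- Position after executing a play from `P`. -/
def posAfter (P : Set α) (l : List (Bool × ChessMove α)) : Set α :=
  l.foldl (fun P bm => P \ {bm.2.src}) P

/-- Hero location after executing a play, hero starting at `h`. -/
def heroAfter (h : α) (l : List (Bool × ChessMove α)) : α :=
  l.foldl (fun h bm => if bm.1 then bm.2.dst else h) h

/-- Hero trail (set of sources of hero moves) after a play, starting from trail `t`. -/
def trailAfter (t : Finset α) (l : List (Bool × ChessMove α)) : Finset α :=
  l.foldl (fun t bm => if bm.1 then insert bm.2.src t else t) t

/-- Number of elements of `l` not belonging to `t`. -/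
def cb (t : Finset α) : List α → ℕ
  | [] => 0
  | y :: l => (if y ∈ t then 0 else 1) + cb t l

/-- Badness of a play: total number of intermediate locations of hero moves not lying
on the hero's own earlier trail. -/
def badness (t : Finset α) : List (Bool × ChessMove α) → ℕ
  | [] => 0
  | bm :: l => if bm.1 then cb t bm.2.mid + badness (insert bm.2.src t) l else badness t l

@[simp] lemma posAfter_nil (P : Set α) : posAfter P ([] : List (Bool × ChessMove α)) = P := rfl
@[simp] lemma posAfter_cons (P : Set α) (bm : Bool × ChessMove α) (l) :
    posAfter P (bm :: l) = posAfter (P \ {bm.2.src}) l := rfl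
lemma posAfter_append (P : Set α) (l₁ l₂ : List (Bool × ChessMove α)) :
    posAfter P (l₁ ++ l₂) = posAfter (posAfter P l₁) l₂ := by
  simp [posAfter, List.foldl_append]

@[simp] lemma heroAfter_nil (h : α) : heroAfter h ([] : List (Bool × ChessMove α)) = h := rfl
@[simp] lemma heroAfter_cons (h : α) (bm : Bool × ChessMove α) (l) :
    heroAfter h (bm :: l) = heroAfter (if bm.1 then bm.2.dst else h) l := rfl
lemma heroAfter_append (h : α) (l₁ l₂ : List (Bool × ChessMove α)) :
    heroAfter h (l₁ ++ l₂) = heroAfter (heroAfter h l₁) l₂ := by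
  simp [heroAfter, List.foldl_append]

@[simp] lemma trailAfter_nil (t : Finset α) :
    trailAfter t ([] : List (Bool × ChessMove α)) = t := rfl
@[simp] lemma trailAfter_cons (t : Finset α) (bm : Bool × ChessMove α) (l) :
    trailAfter t (bm :: l) = trailAfter (if bm.1 then insert bm.2.src t else t) l := rfl
lemma trailAfter_append (t : Finset α) (l₁ l₂ : List (Bool × ChessMove α)) :
    trailAfter t (l₁ ++ l₂) = trailAfter (trailAfter t l₁) l₂ := by
  simp [trailAfter, List.foldl_append]

@[simp] lemma cb_nil (t : Finset α) : cb t ([] : List α) = 0 := rfl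
@[simp] lemma cb_cons (t : Finset α) (y : α) (l : List α) :
    cb t (y :: l) = (if y ∈ t then 0 else 1) + cb t l := rfl
lemma cb_append (t : Finset α) (l₁ l₂ : List α) :
    cb t (l₁ ++ l₂) = cb t l₁ + cb t l₂ := by
  induction l₁ with
  | nil => simp
  | cons a l ih => simp [ih]; ring

lemma cb_eq_zero_iff (t : Finset α) (l : List α) : cb t l = 0 ↔ ∀ y ∈ l, y ∈ t := by
  induction l with
  | nil => simp
  | cons a l ih =>
    by_cases ha : a ∈ t <;> simp [ha, ih]

lemma cb_mono {t t' : Finset α} (h : t ⊆ t') (l : List α) : cb t' l ≤ cb t l := by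
  induction l with
  | nil => simp
  | cons a l ih =>
    by_cases ha : a ∈ t
    · simp [ha, h ha]; exact ih
    · by_cases ha' : a ∈ t' <;> simp [ha, ha'] <;> omega

lemma cb_suffix_le (t : Finset α) {l₁ l₂ : List α} (h : l₁ <:+ l₂) : cb t l₁ ≤ cb t l₂ := by
  obtain ⟨w, rfl⟩ := h
  rw [cb_append]; omega

@[simp] lemma badness_nil (t : Finset α) : badness t ([] : List (Bool × ChessMove α)) = 0 := rfl
@[simp] lemma badness_cons (t : Finset α) (bm : Bool × ChessMove α) (l) :
    badness t (bm :: l) =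
      if bm.1 then cb t bm.2.mid + badness (insert bm.2.src t) l else badness t l := rfl

lemma badness_append (t : Finset α) (l₁ l₂ : List (Bool × ChessMove α)) :
    badness t (l₁ ++ l₂) = badness t l₁ + badness (trailAfter t l₁) l₂ := by
  induction l₁ generalizing t with
  | nil => simp
  | cons bm l ih =>
    by_cases hb : bm.1 <;> simp [hb, ih] <;> omega

lemma badness_mono {t t' : Finset α} (h : t ⊆ t') (l : List (Bool × ChessMove α)) :
    badness t' l ≤ badness t l := by
  induction l generalizing t t' with
  | nil => simp
  | cons bm l ih =>
    by_cases hb : bm.1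
    · simp only [badness_cons, hb, if_true]
      have h1 := cb_mono h bm.2.mid
      have h2 := ih (Finset.insert_subset_insert bm.2.src h)
      omega
    · simp only [badness_cons, hb, if_false]
      exact ih h

lemma subset_trailAfter (t : Finset α) (l : List (Bool × ChessMove α)) :
    t ⊆ trailAfter t l := by
  induction l generalizing t with
  | nil => simp
  | cons bm l ih =>
    by_cases hb : bm.1 <;> simp only [trailAfter_cons, hb, if_true, if_false]
    · exact (Finset.subset_insert _ _).trans (ih _)
    · exact ih _

lemma trailAfter_subset {t t' : Finset α} (h : t ⊆ t') (l : List (Bool × ChessMove α)) :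
    trailAfter t l ⊆ trailAfter t' l := by
  induction l generalizing t t' with
  | nil => simpa
  | cons bm l ih =>
    by_cases hb : bm.1 <;> simp only [trailAfter_cons, hb, if_true, if_false]
    · exact ih (Finset.insert_subset_insert _ h)
    · exact ih h

lemma heroSrc_mem_trailAfter {m : ChessMove α} {l : List (Bool × ChessMove α)}
    (hm : (true, m) ∈ l) (t : Finset α) : m.src ∈ trailAfter t l := by
  induction l generalizing t with
  | nil => simp at hm
  | cons bm l ih =>
    rcases List.mem_cons.1 hm with h | h
    · subst h
      simp only [trailAfter_cons, if_true]
      exact subset_trailAfter _ _ (Finset.mem_insert_self _ _)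
    · by_cases hb : bm.1 <;> simp only [trailAfter_cons, hb, if_true, if_false] <;> exact ih h _

end SoloChessAux

namespace SoloChessAux

set_option linter.unusedSectionVars false

variable {α : Type*} [DecidableEq α] {S T : Set (ChessMove α)}

lemma hv_cons_true {P : Set α} {h : α} {m : ChessMove α} {l : List (Bool × ChessMove α)} :
    HVValidSeq S T P h ((true, m) :: l) ↔
      m ∈ S ∧ m.src = h ∧ MoveValid P m ∧ HVValidSeq S T (P \ {m.src}) m.dst l := by
  rfl

lemma hv_cons_false {P : Set α} {h : α} {m : ChessMove α} {l : List (Bool × ChessMove α)} :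
    HVValidSeq S T P h ((false, m) :: l) ↔
      m ∈ T ∧ m.src ≠ h ∧ m.dst ≠ h ∧ MoveValid P m ∧ HVValidSeq S T (P \ {m.src}) h l := by
  rfl

lemma hv_append {P : Set α} {h : α} {l₁ l₂ : List (Bool × ChessMove α)} :
    HVValidSeq S T P h (l₁ ++ l₂) ↔
      HVValidSeq S T P h l₁ ∧ HVValidSeq S T (posAfter P l₁) (heroAfter h l₁) l₂ := by
  induction l₁ generalizing P h with
  | nil => simp [HVValidSeq]
  | cons bm l ih =>
    obtain ⟨b, m⟩ := bm
    cases b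
    · rw [List.cons_append, hv_cons_false, hv_cons_false, ih]
      simp [and_assoc]
    · rw [List.cons_append, hv_cons_true, hv_cons_true, ih]
      simp [and_assoc]

/-- If the hero's square is already empty, the hero can never move again, so its final
square is empty too. -/
lemma hero_dead {P : Set α} {h : α} {l : List (Bool × ChessMove α)}
    (hv : HVValidSeq S T P h l) (hP : h ∉ P) : heroAfter h l ∉ posAfter P l := by
  induction l generalizing P h with
  | nil => simpa
  | cons bm l ih =>
    obtain ⟨b, m⟩ := bm
    cases b
    · rw [hv_cons_false] at hv
      refine ih hv.2.2.2.2 ?_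
      simp [hP]
    · rw [hv_cons_true] at hv
      exact absurd (hv.2.1 ▸ hv.2.2.1.1) hP

/-- The current hero square is either the source of a later hero move or the final
hero square. -/
lemma hero_current {P : Set α} {h : α} {l : List (Bool × ChessMove α)}
    (hv : HVValidSeq S T P h l) :
    h ∈ trailAfter (∅ : Finset α) l ∨ h = heroAfter h l := by
  induction l generalizing P h with
  | nil => right; rfl
  | cons bm l ih =>
    obtain ⟨b, m⟩ := bm
    cases b
    · rw [hv_cons_false] at hv
      rcases ih hv.2.2.2.2 with h1 | h1
      · left; simpa using h1
      · right; simpa using h1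
    · rw [hv_cons_true] at hv
      left
      simp only [trailAfter_cons, if_true]
      exact subset_trailAfter _ _ (by simp [hv.2.1])

/-- The destination of any hero move is either a later hero-move source or the final
hero square. -/
lemma hero_dst {P : Set α} {h : α} {m : ChessMove α} {l : List (Bool × ChessMove α)}
    (hv : HVValidSeq S T P h l) (hm : (true, m) ∈ l) :
    m.dst ∈ trailAfter (∅ : Finset α) l ∨ m.dst = heroAfter h l := by
  induction l generalizing P h with
  | nil => simp at hm
  | cons bm l ih =>
    obtain ⟨b, m'⟩ := bm
    cases b
    · rw [hv_cons_false] at hv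
      rcases List.mem_cons.1 hm with h1 | h1
      · exact absurd (congrArg Prod.fst h1) (by simp)
      · rcases ih hv.2.2.2.2 h1 with h2 | h2
        · left; simpa using h2
        · right; simpa using h2
    · rw [hv_cons_true] at hv
      rcases List.mem_cons.1 hm with h1 | h1
      · have : m' = m := by injection h1.symm
        subst this
        rcases hero_current hv.2.2.2 with h2 | h2
        · left
          simp only [trailAfter_cons, if_true]
          exact trailAfter_subset (Finset.empty_subset _) l h2
        · right; simpa using h2
      · rcases ih hv.2.2.2 h1 with h2 | h2
        · left
          simp only [trailAfter_cons, if_true]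
          exact trailAfter_subset (Finset.empty_subset _) l h2
        · right; simpa using h2

/-- In a zero-badness play, all intermediate squares of hero moves lie on the hero trail. -/
lemma mids_subset_trail {t : Finset α} {m : ChessMove α} {l : List (Bool × ChessMove α)}
    (h0 : badness t l = 0) (hm : (true, m) ∈ l) : ∀ y ∈ m.mid, y ∈ trailAfter t l := by
  induction l generalizing t with
  | nil => simp at hm
  | cons bm l ih =>
    obtain ⟨b, m'⟩ := bm
    cases b
    · simp only [badness_cons, if_false] at h0
      rcases List.mem_cons.1 hm with h1 | h1
      · exact absurd (congrArg Prod.fst h1) (by simp)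
      · simpa using ih h0 h1
    · simp only [badness_cons, if_true] at h0
      have hcb : cb t m'.mid = 0 := by omega
      have hb : badness (insert m'.src t) l = 0 := by omega
      rcases List.mem_cons.1 hm with h1 | h1
      · have : m' = m := by injection h1.symm
        subst this
        intro y hy
        have : y ∈ t := (cb_eq_zero_iff _ _).1 hcb y hy
        simp only [trailAfter_cons, if_true]
        exact subset_trailAfter _ _ (Finset.mem_insert_of_mem this)
      · intro y hy
        simp only [trailAfter_cons, if_true]
        exact ih hb h1 y hy

/-- Locate the first hero move with positive badness contribution. -/
lemma exists_bad_split {t : Finset α} {l : List (Bool × ChessMove α)}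
    (h : 0 < badness t l) :
    ∃ pre m post, l = pre ++ (true, m) :: post ∧ badness t pre = 0 ∧
      0 < cb (trailAfter t pre) m.mid := by
  induction l generalizing t with
  | nil => simp at h
  | cons bm l ih =>
    obtain ⟨b, m'⟩ := bm
    cases b
    · simp only [badness_cons, if_false] at h
      obtain ⟨pre, m, post, h1, h2, h3⟩ := ih h
      exact ⟨(false, m') :: pre, m, post, by simp [h1], by simpa using h2, by simpa using h3⟩
    · simp only [badness_cons, if_true] at h
      by_cases hcb : 0 < cb t m'.mid
      · exact ⟨[], m', l, rfl, rfl, by simpa using hcb⟩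
      · have : 0 < badness (insert m'.src t) l := by omega
        obtain ⟨pre, m, post, h1, h2, h3⟩ := ih this
        refine ⟨(true, m') :: pre, m, post, by simp [h1], ?_, by simpa using h3⟩
        simp only [badness_cons, if_true]
        omega

/-- Locate the first move of a play whose source is a given square that ends up empty. -/
lemma exists_first_src {x : α} {l : List (Bool × ChessMove α)} :
    ∀ {P : Set α}, x ∈ P → x ∉ posAfter P l →
    ∃ a e b, l = a ++ e :: b ∧ (e : Bool × ChessMove α).2.src = x ∧ x ∈ posAfter P a := by
  induction l with
  | nil => intro P h1 h2; simp at h2; exact absurd h1 h2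
  | cons e₀ l ih =>
    intro P h1 h2
    by_cases hsrc : e₀.2.src = x
    · exact ⟨[], e₀, l, rfl, hsrc, h1⟩
    · have hx : x ∈ P \ {e₀.2.src} := ⟨h1, by simp [Ne.symm]; exact fun h => hsrc h.symm⟩
      rw [posAfter_cons] at h2
      obtain ⟨a, e, b, h3, h4, h5⟩ := ih hx h2
      exact ⟨e₀ :: a, e, b, by simp [h3], h4, by simpa using h5⟩

/-- Split a list at the first occurrence of `x`. -/
lemma split_first {x : α} {l : List α} (h : x ∈ l) :
    ∃ l₁ l₂, l = l₁ ++ x :: l₂ ∧ x ∉ l₁ := by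
  induction l with
  | nil => simp at h
  | cons a l ih =>
    by_cases hax : a = x
    · exact ⟨[], l, by simp [hax], by simp⟩
    · have hxl : x ∈ l := by
        rcases List.mem_cons.1 h with h | h
        · exact absurd h.symm hax
        · exact h
      obtain ⟨l₁, l₂, h1, h2⟩ := ih hxl
      refine ⟨a :: l₁, l₂, by simp [h1], ?_⟩
      simp only [List.mem_cons, not_or]
      exact ⟨fun h => hax h.symm, h2⟩

/-- Split a list at the last occurrence of `x`. -/
lemma split_last {x : α} {l : List α} (h : x ∈ l) :
    ∃ l₁ l₂, l = l₁ ++ x :: l₂ ∧ x ∉ l₂ := by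
  induction l with
  | nil => simp at h
  | cons a l ih =>
    by_cases hxl : x ∈ l
    · obtain ⟨l₁, l₂, h1, h2⟩ := ih hxl
      exact ⟨a :: l₁, l₂, by simp [h1], h2⟩
    · have hax : a = x := by rcases List.mem_cons.1 h with h | h; exact h.symm; exact absurd h hxl
      exact ⟨[], l, by simp [hax], hxl⟩

/-- Comparing splits at the first and the last occurrence. -/
lemma suffix_of_splits {x : α} : ∀ {l₁ l₁' l₂ l₂' : List α},
    l₁ ++ x :: l₂ = l₁' ++ x :: l₂' → x ∉ l₁ → l₂' <:+ l₂ := by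
  intro l₁
  induction l₁ with
  | nil =>
    intro l₁' l₂ l₂' heq hx
    match l₁', heq with
    | [], heq => simp at heq; simp [heq]
    | a :: t, heq =>
      simp only [List.nil_append, List.cons_append, List.cons.injEq] at heq
      exact ⟨t ++ [x], by simp [heq.2]⟩
  | cons a t ih =>
    intro l₁' l₂ l₂' heq hx
    match l₁', heq with
    | [], heq =>
      simp only [List.nil_append, List.cons_append, List.cons.injEq] at heq
      exact absurd (List.mem_cons.2 (Or.inl heq.1.symm)) hx
    | b :: t', heq =>
      simp only [List.cons_append, List.cons.injEq] at heq
      exact ih heq.2 (fun h => hx (List.mem_cons.2 (Or.inr h)))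

end SoloChessAux

namespace SoloChessAux

set_option linter.unusedSectionVars false

variable {α : Type*} [DecidableEq α] {S T : Set (ChessMove α)}

/-- Redirect a villain move jumping over `x` into its initial submove capturing at `x`. -/
def redirect (x : α) (bm : Bool × ChessMove α) : Bool × ChessMove α :=
  if bm.1 = false ∧ x ∈ bm.2.mid then
    (false, ⟨bm.2.src, bm.2.mid.takeWhile (· ≠ x), x⟩)
  else bm

@[simp] lemma redirect_fst (x : α) (bm : Bool × ChessMove α) :
    (redirect x bm).1 = bm.1 := by
  unfold redirect; split <;> simp_all

@[simp] lemma redirect_src (x : α) (bm : Bool × ChessMove α) :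
    (redirect x bm).2.src = bm.2.src := by
  unfold redirect; split <;> rfl

lemma redirect_true (x : α) (m : ChessMove α) : redirect x (true, m) = (true, m) := by
  unfold redirect; simp

lemma badness_map_redirect (x : α) (l : List (Bool × ChessMove α)) (t : Finset α) :
    badness t (l.map (redirect x)) = badness t l := by
  induction l generalizing t with
  | nil => rfl
  | cons bm l ih =>
    obtain ⟨b, m⟩ := bm
    cases b
    · simp only [List.map_cons, badness_cons, redirect_fst]
      simp [ih]
    · simp only [List.map_cons, redirect_true, badness_cons, if_true]
      simp [ih]

lemma trailAfter_map_redirect (x : α) (l : List (Bool × ChessMove α)) (t : Finset α) :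
    trailAfter t (l.map (redirect x)) = trailAfter t l := by
  induction l generalizing t with
  | nil => rfl
  | cons bm l ih =>
    obtain ⟨b, m⟩ := bm
    cases b
    · simp only [List.map_cons, trailAfter_cons, redirect_fst]
      simp [ih]
    · simp only [List.map_cons, redirect_true, trailAfter_cons, if_true]
      simp [ih]

lemma takeWhile_split {x : α} {l : List α} (h : x ∈ l) :
    ∃ l₂, l = l.takeWhile (· ≠ x) ++ x :: l₂ := by
  induction l with
  | nil => simp at h
  | cons a l ih =>
    by_cases hax : a = x
    · subst hax
      refine ⟨l, ?_⟩
      simp [List.takeWhile]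
    · have hxl : x ∈ l := by
        rcases List.mem_cons.1 h with h | h
        · exact absurd h.symm hax
        · exact h
      obtain ⟨l₂, h1⟩ := ih hxl
      refine ⟨l₂, ?_⟩
      have : (a :: l).takeWhile (· ≠ x) = a :: l.takeWhile (· ≠ x) := by
        simp [List.takeWhile, hax]
      rw [this]
      simpa using h1

lemma mem_takeWhile_ne {x y : α} {l : List α} (h : y ∈ l.takeWhile (· ≠ x)) :
    y ∈ l ∧ y ≠ x := by
  constructor
  · exact (List.takeWhile_prefix _).subset h
  · have := List.mem_takeWhile_imp h
    simpa using this

/-- The core transport lemma: if `x` is currently empty but we arrange for it to be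
occupied instead, the remainder of the play stays valid after redirecting all villain
moves that jump over `x` into captures at `x` — provided no hero move touches `x`. -/
lemma core (hT : ClosedUnderSubmoves T) (x : α) :
    ∀ (l : List (Bool × ChessMove α)) (P : Set α) (h : α),
    HVValidSeq S T P h l → x ∉ P → h ≠ x →
    (∀ m : ChessMove α, (true, m) ∈ l → m.dst ≠ x ∧ x ∉ m.mid) →
    HVValidSeq S T (P ∪ {x}) h (l.map (redirect x)) ∧
    posAfter (P ∪ {x}) (l.map (redirect x)) = posAfter P l ∪ {x} ∧
    heroAfter h (l.map (redirect x)) = heroAfter h l := by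
  intro l
  induction l with
  | nil => intro P h _ _ _ _; exact ⟨trivial, by simp, rfl⟩
  | cons bm l ih =>
    intro P h hv hxP hhx hhero
    obtain ⟨b, m⟩ := bm
    cases b
    · rw [hv_cons_false] at hv
      obtain ⟨hmT, hsrc, hdst, hval, hrest⟩ := hv
      have hsrcP : m.src ∈ P := hval.1
      have hxsrc : x ≠ m.src := fun h => hxP (h ▸ hsrcP)
      have hset : (P ∪ {x}) \ {m.src} = (P \ {m.src}) ∪ {x} := by
        ext y
        simp only [Set.mem_diff, Set.mem_union, Set.mem_singleton_iff]
        constructor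
        · rintro ⟨h1 | h1, h2⟩
          · exact Or.inl ⟨h1, h2⟩
          · exact Or.inr h1
        · rintro (⟨h1, h2⟩ | h1)
          · exact ⟨Or.inl h1, h2⟩
          · refine ⟨Or.inr h1, ?_⟩
            rw [h1]; exact hxsrc
      have hxP' : x ∉ P \ {m.src} := fun h => hxP h.1
      have hhero' : ∀ m' : ChessMove α, (true, m') ∈ l → m'.dst ≠ x ∧ x ∉ m'.mid :=
        fun m' hm' => hhero m' (List.mem_cons_of_mem _ hm')
      obtain ⟨ihv, ihpos, ihhero⟩ := ih (P \ {m.src}) h hrest hxP' hhx hhero'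
      by_cases hxmid : x ∈ m.mid
      · have hred : redirect x (false, m) =
            (false, ⟨m.src, m.mid.takeWhile (· ≠ x), x⟩) := by
          unfold redirect; simp [hxmid]
        set m' : ChessMove α := ⟨m.src, m.mid.takeWhile (· ≠ x), x⟩ with hm'
        have hm'T : m' ∈ T := by
          obtain ⟨l₂, hl₂⟩ := takeWhile_split hxmid
          refine hT m hmT m' ⟨[], l₂ ++ [m.dst], ?_⟩
          show [] ++ m'.toList ++ (l₂ ++ [m.dst]) = m.toList
          simp only [ChessMove.toList, hm', List.nil_append]
          conv_rhs => rw [hl₂]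
          simp
        refine ⟨?_, ?_, ?_⟩
        · rw [List.map_cons, hred, hv_cons_false]
          refine ⟨hm'T, hsrc, Ne.symm hhx, ⟨Or.inl hsrcP, Or.inr rfl, ?_⟩, ?_⟩
          · intro y hy
            obtain ⟨hy1, hy2⟩ := mem_takeWhile_ne hy
            rintro (hc | hc)
            · exact hval.2.2 y hy1 hc
            · exact hy2 hc
          · show HVValidSeq S T ((P ∪ {x}) \ {m'.src}) h _
            have : m'.src = m.src := rfl
            rw [this, hset]
            exact ihv
        · rw [List.map_cons, hred, posAfter_cons]
          show posAfter ((P ∪ {x}) \ {m'.src}) _ = _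
          have : m'.src = m.src := rfl
          rw [this, hset, ihpos, posAfter_cons]
        · rw [List.map_cons, hred, heroAfter_cons, heroAfter_cons]
          simpa using ihhero
      · have hred : redirect x (false, m) = (false, m) := by
          unfold redirect; simp [hxmid]
        refine ⟨?_, ?_, ?_⟩
        · rw [List.map_cons, hred, hv_cons_false]
          refine ⟨hmT, hsrc, hdst, ⟨Or.inl hsrcP, Or.inl hval.2.1, ?_⟩, ?_⟩
          · intro y hy
            rintro (hc | hc)
            · exact hval.2.2 y hy hc
            · exact hxmid (hc ▸ hy)
          · rw [hset]; exact ihv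
        · rw [List.map_cons, hred, posAfter_cons, hset, ihpos, posAfter_cons]
        · rw [List.map_cons, hred, heroAfter_cons, heroAfter_cons]
          simpa using ihhero
    · rw [hv_cons_true] at hv
      obtain ⟨hmS, hsrc, hval, hrest⟩ := hv
      obtain ⟨hdstx, hmidx⟩ := hhero m List.mem_cons_self
      have hsrcP : m.src ∈ P := hval.1
      have hxsrc : x ≠ m.src := fun h => hxP (h ▸ hsrcP)
      have hset : (P ∪ {x}) \ {m.src} = (P \ {m.src}) ∪ {x} := by
        ext y
        simp only [Set.mem_diff, Set.mem_union, Set.mem_singleton_iff]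
        constructor
        · rintro ⟨h1 | h1, h2⟩
          · exact Or.inl ⟨h1, h2⟩
          · exact Or.inr h1
        · rintro (⟨h1, h2⟩ | h1)
          · exact ⟨Or.inl h1, h2⟩
          · refine ⟨Or.inr h1, ?_⟩
            rw [h1]; exact hxsrc
      have hxP' : x ∉ P \ {m.src} := fun h => hxP h.1
      have hhero' : ∀ m' : ChessMove α, (true, m') ∈ l → m'.dst ≠ x ∧ x ∉ m'.mid :=
        fun m' hm' => hhero m' (List.mem_cons_of_mem _ hm')
      obtain ⟨ihv, ihpos, ihhero⟩ := ih (P \ {m.src}) m.dst hrest hxP' hdstx hhero'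
      refine ⟨?_, ?_, ?_⟩
      · rw [List.map_cons, redirect_true, hv_cons_true]
        refine ⟨hmS, hsrc, ⟨Or.inl hsrcP, Or.inl hval.2.1, ?_⟩, ?_⟩
        · intro y hy
          rintro (hc | hc)
          · exact hval.2.2 y hy hc
          · exact hmidx (hc ▸ hy)
        · rw [hset]; exact ihv
      · rw [List.map_cons, redirect_true, posAfter_cons, hset, ihpos, posAfter_cons]
      · rw [List.map_cons, redirect_true, heroAfter_cons, heroAfter_cons]
        simpa using ihhero

end SoloChessAux

namespace SoloChessAux

set_option linter.unusedSectionVars false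

variable {α : Type*} [DecidableEq α] {S T : Set (ChessMove α)}

/-- From a zero-badness valid play one can read off a hero path. -/
lemma zero_badness :
    ∀ (l : List (Bool × ChessMove α)) (P : Set α) (h : α) (t : Finset α),
    HVValidSeq S T P h l → (∀ y ∈ t, y ∉ P) → badness t l = 0 →
    ∃ (p : ℕ → α) (mid : ℕ → List α),
      p 0 = h ∧
      heroMoves l = (List.range (heroMoves l).length).map
        (fun i => (⟨p i, mid i, p (i + 1)⟩ : ChessMove α)) ∧
      ∀ i < (heroMoves l).length,
        (⟨p i, mid i, p (i + 1)⟩ : ChessMove α) ∈ S ∧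
        MoveValid {x | x ∉ t ∧ ∀ j < i, x ≠ p j} ⟨p i, mid i, p (i + 1)⟩ := by
  intro l
  induction l with
  | nil =>
    intro P h t _ _ _
    exact ⟨fun _ => h, fun _ => [], rfl, by simp [heroMoves], by simp [heroMoves]⟩
  | cons bm l ih =>
    intro P h t hv ht h0
    obtain ⟨b, m⟩ := bm
    cases b
    · rw [hv_cons_false] at hv
      simp only [badness_cons, if_false] at h0
      have ht' : ∀ y ∈ t, y ∉ P \ {m.src} := fun y hy hc => ht y hy hc.1
      obtain ⟨p, mid, hp0, hfollow, hcond⟩ := ih (P \ {m.src}) h t hv.2.2.2.2 ht' h0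
      have hHM : heroMoves ((false, m) :: l) = heroMoves l := by simp [heroMoves]
      rw [hHM]
      exact ⟨p, mid, hp0, hfollow, hcond⟩
    · rw [hv_cons_true] at hv
      obtain ⟨hmS, hsrc, hval, hrest⟩ := hv
      simp only [badness_cons, if_true] at h0
      have hcb : cb t m.mid = 0 := by omega
      have hb0 : badness (insert m.src t) l = 0 := by omega
      have ht' : ∀ y ∈ insert m.src t, y ∉ P \ {m.src} := by
        intro y hy hc
        rcases Finset.mem_insert.1 hy with h1 | h1
        · exact hc.2 (by simp [h1])
        · exact ht y h1 hc.1
      obtain ⟨p', mid', hp0', hfollow', hcond'⟩ :=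
        ih (P \ {m.src}) m.dst (insert m.src t) hrest ht' hb0
      refine ⟨fun n => match n with | 0 => h | n + 1 => p' n,
              fun n => match n with | 0 => m.mid | n + 1 => mid' n, rfl, ?_, ?_⟩
      · have hHM : heroMoves ((true, m) :: l) = m :: heroMoves l := by simp [heroMoves]
        rw [hHM]
        simp only [List.length_cons]
        rw [List.range_succ_eq_map, List.map_cons, List.map_map]
        congr 1
        case e_head => rw [hp0', ← hsrc]
        
      · intro i hi
        match i with
        | 0 =>
          have hm_eq : m = (⟨h, m.mid, p' 0⟩ : ChessMove α) := by rw [hp0', ← hsrc]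
          refine ⟨hm_eq ▸ hmS, ?_, ?_, ?_⟩
          · show h ∈ {x | x ∉ t ∧ _}
            have hhP : h ∈ P := hsrc ▸ hval.1
            exact ⟨fun hc => ht h hc hhP, by omega⟩
          · show p' 0 ∈ {x | x ∉ t ∧ _}
            rw [hp0']
            exact ⟨fun hc => ht m.dst hc hval.2.1, by omega⟩
          · intro y hy hc
            exact hc.1 ((cb_eq_zero_iff _ _).1 hcb y hy)
        | i' + 1 =>
          have hi' : i' < (heroMoves l).length := by
            have hHM : heroMoves ((true, m) :: l) = m :: heroMoves l := by simp [heroMoves]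
            rw [hHM] at hi
            simpa using hi
          obtain ⟨hc1, hc2⟩ := hcond' i' hi'
          refine ⟨hc1, ?_⟩
          have hseteq : {x | x ∉ t ∧ ∀ j < i' + 1, x ≠
              (fun n => match n with | 0 => h | n + 1 => p' n) j} =
              {x | x ∉ insert m.src t ∧ ∀ j < i', x ≠ p' j} := by
            ext y
            simp only [Set.mem_setOf_eq, Finset.mem_insert, not_or]
            constructor
            · intro ⟨hy1, hy2⟩
              refine ⟨⟨?_, hy1⟩, fun j hj => hy2 (j + 1) (by omega)⟩
              intro hc
              exact hy2 0 (by omega) (by rw [hc, hsrc])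
            · intro ⟨⟨hy1, hy2⟩, hy3⟩
              refine ⟨hy2, fun j hj => ?_⟩
              match j with
              | 0 =>
                show y ≠ h
                exact hsrc ▸ hy1
              | j' + 1 => exact hy3 j' (by omega)
          rw [hseteq]
          exact hc2

end SoloChessAux

namespace SoloChessAux

set_option linter.unusedSectionVars false

variable {α : Type*} [DecidableEq α] {S T : Set (ChessMove α)}

lemma cb_pos_exists {t : Finset α} {l : List α} (h : 0 < cb t l) : ∃ x ∈ l, x ∉ t := by
  by_contra hc
  push_neg at hc
  have : cb t l = 0 := (cb_eq_zero_iff _ _).2 hc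
  omega

/-- The surgery step: a solution of positive badness can be repaired into a solution of
strictly smaller badness. -/
lemma surgery (hS : ClosedUnderSubmoves S) (hT : ClosedUnderSubmoves T)
    {p0 : α} {ms : List (Bool × ChessMove α)}
    (hsol : HVSolution S T p0 ms) (hpos : 0 < badness ∅ ms) :
    ∃ ms', HVSolution S T p0 ms' ∧ badness ∅ ms' < badness ∅ ms := by
  obtain ⟨hv, hfin⟩ := hsol
  -- decompose at the first bad hero move
  obtain ⟨pre, m, post, hms, hpre0, hcb⟩ := exists_bad_split hpos
  subst hms
  set tr : Finset α := trailAfter ∅ pre with htr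
  obtain ⟨x, hxmem, hxtr⟩ := cb_pos_exists hcb
  -- split the validity of the play
  rw [hv_append] at hv
  obtain ⟨hv1, hv2⟩ := hv
  set P₁ : Set α := posAfter Set.univ pre with hP₁
  set h₁ : α := heroAfter p0 pre with hh₁
  rw [hv_cons_true] at hv2
  obtain ⟨hmS, hsrcm, hval, hpost⟩ := hv2
  rw [hsrcm] at hpost
  have hxP₁ : x ∉ P₁ := hval.2.2 x hxmem
  have hh₁P₁ : h₁ ∈ P₁ := hsrcm ▸ hval.1
  have hxh₁ : x ≠ h₁ := fun h => hxP₁ (h ▸ hh₁P₁)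
  -- the hero move is not degenerate
  have hdsth₁ : m.dst ≠ h₁ := by
    intro hdeg
    have h1 : m.dst ∉ P₁ \ {h₁} := fun hc => hc.2 (by simp [hdeg])
    have h2 := hero_dead hpost h1
    have h3 : hvFinalPos (pre ++ (true, m) :: post) = posAfter (P₁ \ {h₁}) post := by
      show posAfter Set.univ _ = _
      rw [posAfter_append, posAfter_cons, ← hP₁, hsrcm]
    have h4 : hvFinalHero p0 (pre ++ (true, m) :: post) = heroAfter m.dst post := by
      show heroAfter p0 _ = _
      rw [heroAfter_append, heroAfter_cons, ← hh₁]
      simp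
    rw [h3, h4] at hfin
    exact h2 (hfin ▸ rfl)
  -- find the villain move that emptied x
  have hxuniv : x ∈ (Set.univ : Set α) := trivial
  obtain ⟨a, e, b, hpre, hesrc, hxPa⟩ := exists_first_src hxuniv (hP₁ ▸ hxP₁)
  obtain ⟨be, μ⟩ := e
  cases be with
  | true =>
    exfalso
    have : μ.src ∈ trailAfter ∅ pre :=
      heroSrc_mem_trailAfter (by rw [hpre]; exact List.mem_append_right _ List.mem_cons_self) ∅
    rw [hesrc] at this
    exact hxtr this
  | false =>
  subst hpre
  set Pa : Set α := posAfter Set.univ a with hPa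
  set ha : α := heroAfter p0 a with hha
  rw [hv_append] at hv1
  obtain ⟨hva, hve⟩ := hv1
  rw [hv_cons_false] at hve
  obtain ⟨hμT, hμsrc, hμdst, hμval, hvb⟩ := hve
  simp only at hesrc
  rw [hesrc] at hvb
  have hax : ha ≠ x := fun h => hμsrc (hesrc.trans h.symm)
  -- hypotheses of the core lemma
  have hheromem : ∀ m₂ : ChessMove α, (true, m₂) ∈ b →
      (true, m₂) ∈ a ++ (false, μ) :: b := fun m₂ hm₂ =>
    List.mem_append_right _ (List.mem_cons_of_mem _ hm₂)
  have hheros : ∀ m₂ : ChessMove α, (true, m₂) ∈ b → m₂.dst ≠ x ∧ x ∉ m₂.mid := by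
    intro m₂ hm₂
    constructor
    · intro hdx
      rcases hero_dst (hv_append.2 ⟨hva, hv_cons_false.2 ⟨hμT, hμsrc, hμdst, hμval, hesrc ▸ hvb⟩⟩)
          (hheromem m₂ hm₂) with h1 | h1
      · exact hxtr (hdx ▸ h1)
      · exact hxh₁ (hdx ▸ h1)
    · intro hxm
      exact hxtr (mids_subset_trail hpre0 (hheromem m₂ hm₂) x hxm)
  have hxPb : x ∉ Pa \ {x} := fun hc => hc.2 rfl
  obtain ⟨cv, cpos, chero⟩ := core hT x b (Pa \ {x}) ha hvb hxPb hax hheros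
  have hPaeq : (Pa \ {x}) ∪ {x} = Pa := Set.diff_union_of_subset (by simpa using hxPa)
  rw [hPaeq] at cv cpos
  -- compute the state after `pre`
  have hP₁eq : P₁ = posAfter (Pa \ {x}) b := by
    rw [hP₁, posAfter_append, posAfter_cons, ← hPa, hesrc]
  have hh₁eq : h₁ = heroAfter ha b := by
    rw [hh₁, heroAfter_append, heroAfter_cons, ← hha]
    simp
  -- split the bad mid at the first and at the last occurrence of x
  obtain ⟨mid₁, mid₂, hsplit1, hx1⟩ := split_first hxmem
  obtain ⟨mid₁', mid₂', hsplit2, hx2⟩ := split_last hxmem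
  have hsuf : mid₂' <:+ mid₂ := suffix_of_splits (hsplit1.symm.trans hsplit2) hx1
  set m_a : ChessMove α := ⟨h₁, mid₁, x⟩ with hm_a
  set m_b : ChessMove α := ⟨x, mid₂', m.dst⟩ with hm_b
  have hmaS : m_a ∈ S := by
    refine hS m hmS m_a ⟨[], mid₂ ++ [m.dst], ?_⟩
    show [] ++ m_a.toList ++ (mid₂ ++ [m.dst]) = m.toList
    simp only [ChessMove.toList, hm_a, List.nil_append]
    rw [hsplit1, hsrcm]
    simp
  have hmbS : m_b ∈ S := by
    refine hS m hmS m_b ⟨m.src :: mid₁', [], ?_⟩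
    show (m.src :: mid₁') ++ m_b.toList ++ [] = m.toList
    simp only [ChessMove.toList, hm_b]
    rw [hsplit2]
    simp
  -- the repaired play
  set b' := b.map (redirect x) with hb'
  refine ⟨a ++ (b' ++ ((true, m_a) :: (true, m_b) :: post)), ⟨?_, ?_⟩, ?_⟩
  · -- validity
    rw [hv_append, ← hPa, ← hha]
    refine ⟨hva, ?_⟩
    rw [hv_append]
    refine ⟨cv, ?_⟩
    rw [cpos, ← hP₁eq, chero, ← hh₁eq]
    rw [hv_cons_true]
    refine ⟨hmaS, rfl, ⟨Set.mem_union_left _ hh₁P₁, Set.mem_union_right _ rfl, ?_⟩, ?_⟩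
    · intro y hy
      have hym : y ∈ m.mid := by rw [hsplit1]; exact List.mem_append_left _ hy
      rintro (hc | hc)
      · exact hval.2.2 y hym hc
      · exact hx1 (hc ▸ hy)
    · show HVValidSeq S T ((P₁ ∪ {x}) \ {m_a.src}) m_a.dst _
      have hsa : m_a.src = h₁ := rfl
      have hda : m_a.dst = x := rfl
      rw [hsa, hda, hv_cons_true]
      refine ⟨hmbS, rfl, ⟨⟨Set.mem_union_right _ rfl, hxh₁⟩,
        ⟨Set.mem_union_left _ hval.2.1, hdsth₁⟩, ?_⟩, ?_⟩
      · intro y hy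
        have hym : y ∈ m.mid := by
          rw [hsplit2]
          exact List.mem_append_right _ (List.mem_cons_of_mem _ hy)
        rintro ⟨hc | hc, -⟩
        · exact hval.2.2 y hym hc
        · exact hx2 (hc ▸ hy)
      · show HVValidSeq S T (((P₁ ∪ {x}) \ {h₁}) \ {m_b.src}) m_b.dst post
        have hsb : m_b.src = x := rfl
        have hdb : m_b.dst = m.dst := rfl
        rw [hsb, hdb]
        have hseteq : ((P₁ ∪ {x}) \ {h₁}) \ {x} = P₁ \ {h₁} := by
          ext y
          simp only [Set.mem_diff, Set.mem_union, Set.mem_singleton_iff]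
          constructor
          · rintro ⟨⟨h1 | h1, h2⟩, h3⟩
            · exact ⟨h1, h2⟩
            · exact absurd h1 h3
          · rintro ⟨h1, h2⟩
            exact ⟨⟨Or.inl h1, h2⟩, fun hc => hxP₁ (hc ▸ h1)⟩
        rw [hseteq]
        exact hpost
  · -- final condition
    have hfp : hvFinalPos (a ++ (b' ++ ((true, m_a) :: (true, m_b) :: post))) =
        posAfter (P₁ \ {h₁}) post := by
      show posAfter Set.univ _ = _
      rw [posAfter_append, posAfter_append, ← hPa, cpos, posAfter_cons, posAfter_cons]
      have hsa : m_a.src = h₁ := rfl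
      have hsb : m_b.src = x := rfl
      rw [hsa, hsb, ← hP₁eq]
      have hseteq2 : ((P₁ ∪ {x}) \ {h₁}) \ {x} = P₁ \ {h₁} := by
        ext y
        simp only [Set.mem_diff, Set.mem_union, Set.mem_singleton_iff]
        constructor
        · rintro ⟨⟨h1 | h1, h2⟩, h3⟩
          · exact ⟨h1, h2⟩
          · exact absurd h1 h3
        · rintro ⟨h1, h2⟩
          exact ⟨⟨Or.inl h1, h2⟩, fun hc => hxP₁ (hc ▸ h1)⟩
      rw [hseteq2]
    have hfh : hvFinalHero p0 (a ++ (b' ++ ((true, m_a) :: (true, m_b) :: post))) =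
        heroAfter m.dst post := by
      show heroAfter p0 _ = _
      rw [heroAfter_append, heroAfter_append, ← hha, chero, ← hh₁eq, heroAfter_cons,
        heroAfter_cons]
      simp
      rfl
    have h3 : hvFinalPos ((a ++ (false, μ) :: b) ++ (true, m) :: post) =
        posAfter (P₁ \ {h₁}) post := by
      show posAfter Set.univ _ = _
      rw [posAfter_append, posAfter_cons, ← hP₁, hsrcm]
    have h4 : hvFinalHero p0 ((a ++ (false, μ) :: b) ++ (true, m) :: post) =
        heroAfter m.dst post := by
      show heroAfter p0 _ = _
      rw [heroAfter_append, heroAfter_cons, ← hh₁]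
      simp
    rw [hfp, hfh, ← h3, ← h4]
    exact hfin
  · -- badness decreases
    have hta : trailAfter ∅ (a ++ (false, μ) :: b) = trailAfter (trailAfter ∅ a) b := by
      rw [trailAfter_append, trailAfter_cons]
      simp
    have hbad_pre : badness ∅ a = 0 ∧ badness (trailAfter ∅ a) b = 0 := by
      have := hpre0
      rw [badness_append, badness_cons] at this
      simp only [if_neg (by simp : ¬ ((false, μ) : Bool × ChessMove α).1 = true)] at this
      constructor <;> omega
    have hnew : badness ∅ (a ++ (b' ++ ((true, m_a) :: (true, m_b) :: post))) =
        cb tr mid₁ + cb (insert h₁ tr) mid₂' + badness (insert x (insert h₁ tr)) post := by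
      rw [badness_append, badness_append, hbad_pre.1, badness_map_redirect,
        hbad_pre.2, trailAfter_map_redirect, ← hta, ← htr, badness_cons, badness_cons]
      have hsa : m_a.src = h₁ := rfl
      have hsb : m_b.src = x := rfl
      have hmida : m_a.mid = mid₁ := rfl
      have hmidb : m_b.mid = mid₂' := rfl
      simp only [hsa, hsb, hmida, hmidb]
      simp
      omega
    have hold : badness ∅ ((a ++ (false, μ) :: b) ++ (true, m) :: post) =
        cb tr m.mid + badness (insert h₁ tr) post := by
      rw [badness_append, hpre0, badness_cons, ← htr]
      simp only [hsrcm]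
      simp
    have hcbsplit : cb tr m.mid = cb tr mid₁ + 1 + cb tr mid₂ := by
      rw [hsplit1, cb_append, cb_cons, if_neg hxtr]
      omega
    have e1 : cb tr mid₂' ≤ cb tr mid₂ := cb_suffix_le tr hsuf
    have e2 : cb (insert h₁ tr) mid₂' ≤ cb tr mid₂' := cb_mono (Finset.subset_insert _ _) _
    have e3 : badness (insert x (insert h₁ tr)) post ≤ badness (insert h₁ tr) post :=
      badness_mono (Finset.subset_insert _ _) _
    rw [hnew, hold, hcbsplit]
    omega

end SoloChessAux

namespace SoloChessAux

set_option linter.unusedSectionVars false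

variable {α : Type*} [DecidableEq α] {S T : Set (ChessMove α)}

/-- A zero-badness solution directly yields the desired hero-path solution. -/
lemma extract {p0 : α} {ms : List (Bool × ChessMove α)}
    (hsol : HVSolution S T p0 ms) (h0 : badness ∅ ms = 0) :
    ∃ (ms' : List (Bool × ChessMove α)) (p : ℕ → α) (k : ℕ),
      p 0 = p0 ∧ HVSolution S T p0 ms' ∧ HeroFollows p k ms' ∧ HeroPath S p k := by
  obtain ⟨p, mid, hp0, hfollow, hcond⟩ :=
    zero_badness ms Set.univ p0 ∅ hsol.1 (by simp) h0
  refine ⟨ms, p, (heroMoves ms).length, hp0, hsol, ⟨mid, hfollow⟩, ?_⟩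
  intro i hi
  refine ⟨mid i, (hcond i hi).1, ?_⟩
  have hseteq : {x : α | ∀ j < i, x ≠ p j} = {x | x ∉ (∅ : Finset α) ∧ ∀ j < i, x ≠ p j} := by
    ext y; simp
  rw [hseteq]
  exact (hcond i hi).2

end SoloChessAux

open SoloChessAux in
/-- (Hero–villain setting.) If the puzzle has a solution, then it has a
solution in which the sequence of locations visited by the hero forms a hero path. -/
theorem solution_hero_path {α : Type*} [Fintype α] [DecidableEq α]
    (S T : Set (ChessMove α))
    (hS : ClosedUnderSubmoves S) (hT : ClosedUnderSubmoves T) (hST : S ⊆ T)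
    (p0 : α) (ms : List (Bool × ChessMove α)) (hsol : HVSolution S T p0 ms) :
    ∃ (ms' : List (Bool × ChessMove α)) (p : ℕ → α) (k : ℕ),
      p 0 = p0 ∧ HVSolution S T p0 ms' ∧ HeroFollows p k ms' ∧ HeroPath S p k := by
  suffices H : ∀ (n : ℕ) (ms : List (Bool × ChessMove α)), badness ∅ ms ≤ n →
      HVSolution S T p0 ms →
      ∃ (ms' : List (Bool × ChessMove α)) (p : ℕ → α) (k : ℕ),
        p 0 = p0 ∧ HVSolution S T p0 ms' ∧ HeroFollows p k ms' ∧ HeroPath S p k by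
    exact H _ ms le_rfl hsol
  intro n
  induction n with
  | zero =>
    intro ms hb hsol
    exact extract hsol (by omega)
  | succ n ih =>
    intro ms hb hsol
    by_cases h0 : badness ∅ ms = 0
    · exact extract hsol h0
    · obtain ⟨ms'', hsol'', hlt⟩ := surgery hS hT hsol (by omega)
      exact ih ms'' (by omega) hsol''
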